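/- Let {D_{i,j}}, indexed by the 2-subsets {i,j} of [n], be a family of positive real numbers satisfying the triangle inequalities (D_{i,j} ≤ D_{i,k} + D_{k,j} for all distinct i,j,k). Then {D_{i,j}} is p-treelike if and only if, for all distinct i,j,k,h ∈ [n], the maximum of {D_{i,j}+D_{k,h}, D_{i,k}+D_{j,h}, D_{i,h}+D_{k,j}} is attained at least twice. -/

import Mathlib

open scoped Classical
open Finset

noncomputable section

/-- The total weight of the minimal subtree of a tree `G` spanning the vertex set `A`:
the sum of the weights of those edges of `G` that lie on every walk between some pair
of vertices of `A` (in a tree, these are exactly the edges of the minimal subtree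
containing `A`). -/
def treeWeight {V : Type} [Fintype V] (G : SimpleGraph V) (w : Sym2 V → ℝ)
    (A : Finset V) : ℝ :=
  ∑ e ∈ (Finset.univ : Finset (Sym2 V)),
    if e ∈ G.edgeSet ∧ ∃ a ∈ A, ∃ b ∈ A, ∀ p : G.Walk a b, e ∈ p.edges then w e else 0

/-- A weighted finite tree whose set of leaves is (the image of) `α`. -/
structure WTree (α : Type) [Fintype α] : Type 1 where
  V : Type
  fintypeV : Fintype V
  G : SimpleGraph V
  isTree : G.IsTree
  w : Sym2 V → ℝ
  label : α → V
  label_inj : Function.Injective label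
  leaf_iff : ∀ v : V, (G.neighborSet v).ncard = 1 ↔ v ∈ Set.range label

attribute [instance] WTree.fintypeV

namespace WTree

variable {α : Type} [Fintype α]

/-- The `k`-weight `D_I` : the weight of the minimal subtree containing the leaves
labelled by `I`. -/
def D (T : WTree α) (I : Finset α) : ℝ := treeWeight T.G T.w (I.image T.label)

/-- A node is a vertex of degree `> 2`. -/
def IsNode (T : WTree α) (v : T.V) : Prop := 2 < (T.G.neighborSet v).ncard

/-- Two vertices are neighbours if the path between them contains exactly one node. -/
def Neighbours (T : WTree α) (a b : T.V) : Prop :=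
  a ≠ b ∧ ∃ p : T.G.Walk a b, p.IsPath ∧
    (p.support.toFinset.filter (fun v => T.IsNode v)).card = 1

/-- Two leaves (given by their labels) are neighbours. -/
def LeafNbr (T : WTree α) (i j : α) : Prop := T.Neighbours (T.label i) (T.label j)

/-- A set of leaves is a cherry if any two of its elements are neighbours. -/
def IsCherry (T : WTree α) (C : Finset α) : Prop :=
  ∀ i ∈ C, ∀ j ∈ C, i ≠ j → T.LeafNbr i j

/-- A cherry is complete if it is not strictly contained in another cherry. -/
def IsCompleteCherry (T : WTree α) (C : Finset α) : Prop :=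
  T.IsCherry C ∧ ∀ C' : Finset α, T.IsCherry C' → ¬ C ⊂ C'

/-- Buneman's index `⟨i,j|l,m⟩` : in the subtree spanned by the four leaves, `i,j` are
neighbours, `l,m` are neighbours and `i,l` are not neighbours; equivalently, the path
from `i` to `j` is disjoint from the path from `l` to `m`. -/
def Buneman (T : WTree α) (i j l m : α) : Prop :=
  i ≠ j ∧ l ≠ m ∧
  ∃ (p : T.G.Walk (T.label i) (T.label j)) (q : T.G.Walk (T.label l) (T.label m)),
    p.IsPath ∧ q.IsPath ∧ ∀ v, v ∈ p.support → v ∉ q.support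

/-- The edge `e` lies on the (unique) path between `a` and `b`. -/
def edgeBetween (T : WTree α) (a b : T.V) (e : Sym2 T.V) : Prop :=
  ∀ p : T.G.Walk a b, e ∈ p.edges

/-- The set of leaf labels lying on the `u`-side of the edge `{u,v}`. -/
def sideLeaves (T : WTree α) (u v : T.V) : Finset α :=
  Finset.univ.filter fun i => T.edgeBetween (T.label i) v s(u, v)

/-- A pseudostar of kind `(n,k)` (with `n = #α`): every edge divides the set of leaves
into two sets such that at least one of them has cardinality `≥ k`. -/
def IsPseudostar (T : WTree α) (k : ℕ) : Prop :=
  ∀ u v : T.V, T.G.Adj u v →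
    k ≤ (T.sideLeaves u v).card ∨ k ≤ (T.sideLeaves v u).card

/-- A tree is essential if it has no vertices of degree 2. -/
def IsEssential (T : WTree α) : Prop := ∀ v : T.V, (T.G.neighborSet v).ncard ≠ 2

/-- The edge `e` lies on the twig of the leaf labelled `i`, i.e. on the path from that
leaf to the nearest node (equivalently, on the path from the leaf to every node). -/
def OnTwig (T : WTree α) (i : α) (e : Sym2 T.V) : Prop :=
  ∀ w : T.V, T.IsNode w → T.edgeBetween (T.label i) w e

/-- An edge is internal if it is an edge of the tree lying on no twig. -/
def IsInternalEdge (T : WTree α) (e : Sym2 T.V) : Prop :=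
  e ∈ T.G.edgeSet ∧ ∀ i : α, ¬ T.OnTwig i e

/-- All internal edges have nonzero weight. -/
def InternalNonzero (T : WTree α) : Prop := ∀ e, T.IsInternalEdge e → T.w e ≠ 0

/-- All edges have positive weight. -/
def PositiveWeighted (T : WTree α) : Prop := ∀ e ∈ T.G.edgeSet, 0 < T.w e

/-- All weights are nonnegative and all internal edges have positive weight. -/
def NNIPWeighted (T : WTree α) : Prop :=
  (∀ e ∈ T.G.edgeSet, 0 ≤ T.w e) ∧ ∀ e, T.IsInternalEdge e → 0 < T.w e

/-- The edge `e` belongs to the minimal subtree containing the leaves labelled by `I`. -/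
def inMinSubtree (T : WTree α) (I : Finset α) (e : Sym2 T.V) : Prop :=
  e ∈ T.G.edgeSet ∧ ∃ a ∈ I, ∃ b ∈ I, T.edgeBetween (T.label a) (T.label b) e

end WTree

/-- Isomorphism of weighted trees fixing the labelled leaves. -/
def WIso {α : Type} [Fintype α] (T T' : WTree α) : Prop :=
  ∃ φ : T.V ≃ T'.V,
    (∀ a b : T.V, T.G.Adj a b ↔ T'.G.Adj (φ a) (φ b)) ∧
    (∀ a b : T.V, T.G.Adj a b → T.w s(a, b) = T'.w s(φ a, φ b)) ∧
    ∀ i : α, φ (T.label i) = T'.label i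

/-- A family indexed by the `k`-subsets of `α` is l-treelike if it is realized by a
weighted tree with leaf set `α`. -/
def IsLTreelike (α : Type) [Fintype α] (k : ℕ) (D : Finset α → ℝ) : Prop :=
  ∃ T : WTree α, ∀ I : Finset α, I.card = k → T.D I = D I

/-- p-l-treelike : realized by a positive-weighted tree with leaf set `α`. -/
def IsPLTreelike (α : Type) [Fintype α] (k : ℕ) (D : Finset α → ℝ) : Prop :=
  ∃ T : WTree α, T.PositiveWeighted ∧ ∀ I : Finset α, I.card = k → T.D I = D I

/-- nn-ip-l-treelike : realized by a nonnegative-weighted, internal-positive-weighted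
tree with leaf set `α`. -/
def IsNNIPLTreelike (α : Type) [Fintype α] (k : ℕ) (D : Finset α → ℝ) : Prop :=
  ∃ T : WTree α, T.NNIPWeighted ∧ ∀ I : Finset α, I.card = k → T.D I = D I

/-- p-treelike : realized on a subset of the vertices of a positive-weighted tree. -/
def IsPTreelike (n k : ℕ) (D : Finset (Fin n) → ℝ) : Prop :=
  ∃ (V : Type) (_ : Fintype V) (G : SimpleGraph V) (w : Sym2 V → ℝ) (f : Fin n → V),
    G.IsTree ∧ Function.Injective f ∧ (∀ e ∈ G.edgeSet, 0 < w e) ∧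
    ∀ I : Finset (Fin n), I.card = k → treeWeight G w (I.image f) = D I


/-- A hierarchy: a set system in which any two members intersect in `∅` or in one
of the two. -/
def IsHierarchy {β : Type} (ℋ : Set (Finset β)) : Prop :=
  ∀ H ∈ ℋ, ∀ H' ∈ ℋ, H ∩ H' = ∅ ∨ H ∩ H' = H ∨ H ∩ H' = H'

/-- The element `Σ_{H ∈ ℋ, H ∩ A ≠ ∅, H ⊉ A} H` of the free ℤ-module on the clusters. -/
def hsum {β : Type} (ℋ : Set (Finset β)) (A : Finset β) : Finset β →₀ ℤ :=
  ∑ᶠ H ∈ {H : Finset β | H ∈ ℋ ∧ (H ∩ A).Nonempty ∧ ¬ A ⊆ H}, Finsupp.single H 1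

/-- `m` is a minimal cluster of `ℋ` containing `t`. -/
def IsMinCluster {β : Type} (ℋ : Set (Finset β)) (t : β) (m : Finset β) : Prop :=
  m ∈ ℋ ∧ t ∈ m ∧ ∀ H ∈ ℋ, t ∈ H → ¬ H ⊂ m

/-- `M` is a maximal cluster of `ℋ` containing `t`. -/
def IsMaxCluster {β : Type} (ℋ : Set (Finset β)) (t : β) (M : Finset β) : Prop :=
  M ∈ ℋ ∧ t ∈ M ∧ ∀ H ∈ ℋ, t ∈ H → ¬ M ⊂ H

/-- `M` is a maximal cluster of `ℋ` containing the cluster `J`. -/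
def IsMaxClusterContaining {β : Type} (ℋ : Set (Finset β)) (J M : Finset β) : Prop :=
  M ∈ ℋ ∧ J ⊆ M ∧ ∀ H ∈ ℋ, J ⊆ H → ¬ M ⊂ H

section FamHierarchy

variable (n k : ℕ) (D : Finset (Fin n) → ℝ)

/-- `𝒞⁰` : the sets `Z` of cardinality `≥ 2` such that for all `i,j ∈ Z` the quantity
`D_{i,X} - D_{j,X}` does not depend on `X ∈ ([n] - {i,j} choose k-1)`. -/
def famC0 : Set (Finset (Fin n)) :=
  {Z | 2 ≤ Z.card ∧ ∀ i ∈ Z, ∀ j ∈ Z, ∀ X X' : Finset (Fin n),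
    X.card = k - 1 → i ∉ X → j ∉ X → X'.card = k - 1 → i ∉ X' → j ∉ X' →
    D (insert i X) - D (insert j X) = D (insert i X') - D (insert j X')}

/-- `𝒞̲⁰` : the maximal elements of `𝒞⁰`. -/
def famMaxC0 : Set (Finset (Fin n)) :=
  {Z | Z ∈ famC0 n k D ∧ ∀ Z' ∈ famC0 n k D, ¬ Z ⊂ Z'}

/-- Condition (b) in the definition of `𝒢^s` : there are `R, S` in
`([n]-{i,j,x,y} choose k-2)` with `D_{ijR} + D_{xyR} ≠ D_{ixR} + D_{jyR}` and
`D_{ijS} + D_{xyS} ≠ D_{iyS} + D_{jxS}`. -/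
def famCondB (i j x y : Fin n) : Prop :=
  ∃ R S : Finset (Fin n),
    R.card = k - 2 ∧ i ∉ R ∧ j ∉ R ∧ x ∉ R ∧ y ∉ R ∧
    S.card = k - 2 ∧ i ∉ S ∧ j ∉ S ∧ x ∉ S ∧ y ∉ S ∧
    D (insert i (insert j R)) + D (insert x (insert y R)) ≠
      D (insert i (insert x R)) + D (insert j (insert y R)) ∧
    D (insert i (insert j S)) + D (insert x (insert y S)) ≠
      D (insert i (insert y S)) + D (insert j (insert x S))

/-- Condition (b) in the definition of `𝒞^s` (with the roles of the pairs permuted). -/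
def famCondB' (i j x y : Fin n) : Prop :=
  ∃ R S : Finset (Fin n),
    R.card = k - 2 ∧ i ∉ R ∧ j ∉ R ∧ x ∉ R ∧ y ∉ R ∧
    S.card = k - 2 ∧ i ∉ S ∧ j ∉ S ∧ x ∉ S ∧ y ∉ S ∧
    D (insert i (insert x R)) + D (insert j (insert y R)) ≠
      D (insert i (insert j R)) + D (insert x (insert y R)) ∧
    D (insert i (insert x S)) + D (insert j (insert y S)) ≠
      D (insert i (insert y S)) + D (insert j (insert x S))

/-- `𝒢⁰`. -/
def famG0 : Set (Finset (Fin n)) :=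
  {Z | Z ∈ famMaxC0 n k D ∧ Z.card ≤ n - k ∧
    ∀ i ∈ Z, ∀ j ∈ Z, ∀ x y : Fin n, x ∉ Z → y ∉ Z →
      (({i, j} : Finset (Fin n)) ∈ famMaxC0 n k D ∧
        ({x, y} : Finset (Fin n)) ∈ famMaxC0 n k D) ∨
      famCondB n k D i j x y}

/-- `𝒞^s`, relative to the surviving set `N = [n]^s`. -/
def famCs (N : Finset (Fin n)) : Set (Finset (Fin n)) :=
  {Z | Z ⊆ N ∧ 2 ≤ Z.card ∧ ∀ i ∈ Z, ∀ j ∈ Z, ∀ x y : Fin n,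
    x ∈ N → y ∈ N → x ≠ i → x ≠ j → y ≠ i → y ≠ j →
    ¬ (({i, x} : Finset (Fin n)) ∈ famMaxC0 n k D ∧
        ({j, y} : Finset (Fin n)) ∈ famMaxC0 n k D) ∧
    ¬ famCondB' n k D i j x y}

/-- `𝒞̲^s` : the maximal elements of `𝒞^s`. -/
def famMaxCs (N : Finset (Fin n)) : Set (Finset (Fin n)) :=
  {Z | Z ∈ famCs n k D N ∧ ∀ Z' ∈ famCs n k D N, ¬ Z ⊂ Z'}

/-- The chain relation expressing that `y0` descends from `y` through the history
`hs = [𝒢⁰, …, 𝒢^{s-1}]` of pruned families. -/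
def descChain : List (Set (Finset (Fin n))) → Fin n → Fin n → Prop
  | [], y0, y => y0 = y
  | G :: rest, y0, y =>
      ∃ y1 : Fin n, (y1 = y0 ∨ ∃ Z ∈ G, y0 ∈ Z ∧ y1 ∈ Z) ∧ descChain rest y1 y

/-- `∂Z` : the set of elements of `[n]` descending from an element of `Z`. -/
def bdry (hs : List (Set (Finset (Fin n)))) (Z : Finset (Fin n)) : Finset (Fin n) :=
  Finset.univ.filter fun y0 => ∃ ys ∈ Z, descChain n hs y0 ys

/-- `𝒢^s` (for `s ≥ 1`), relative to the surviving set `N = [n]^s` and the history `hs`. -/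
def famGs (N : Finset (Fin n)) (hs : List (Set (Finset (Fin n)))) :
    Set (Finset (Fin n)) :=
  {Z | Z ∈ famMaxCs n k D N ∧ (bdry n hs Z).card ≤ n - k ∧
    ∀ i ∈ Z, ∀ j ∈ Z, ∀ x y : Fin n, x ∉ Z → y ∉ Z →
      (({i, j} : Finset (Fin n)) ∈ famMaxC0 n k D ∧
        ({x, y} : Finset (Fin n)) ∈ famMaxC0 n k D) ∨
      famCondB n k D i j x y}

/-- The pair `([n]^s, [𝒢⁰, …, 𝒢^{s-1}])`. -/
def famStage : ℕ → Finset (Fin n) × List (Set (Finset (Fin n)))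
  | 0 => (Finset.univ, [])
  | s + 1 =>
      let p := famStage s
      let G := if s = 0 then famG0 n k D else famGs n k D p.1 p.2
      (p.1.filter fun y => ∀ Z ∈ G, y ∈ Z → ∀ z ∈ Z, y ≤ z, p.2 ++ [G])

/-- `𝒢^s`. -/
def famGAt (s : ℕ) : Set (Finset (Fin n)) :=
  if s = 0 then famG0 n k D
  else famGs n k D (famStage n k D s).1 (famStage n k D s).2

/-- The hierarchy over `[n]` associated to the family `{D_I}`. -/
def famHier : Set (Finset (Fin n)) :=
  {A | ∃ s : ℕ, ∃ Z ∈ famGAt n k D s, A = bdry n (famStage n k D s).2 Z}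

/-- Condition (i): if `ℋ` covers `[n]` then the number of maximal clusters is not 2. -/
def CondI {n : ℕ} (ℋ : Set (Finset (Fin n))) : Prop :=
  (∀ x : Fin n, ∃ H ∈ ℋ, x ∈ H) →
    {H | H ∈ ℋ ∧ ∀ H' ∈ ℋ, ¬ H ⊂ H'}.ncard ≠ 2

/-- Condition (ii): for `q ∈ {1,…,n-1}`, `s ∈ {1, k-1}`, `W, W' ∈ ([n] choose s)`,
the sum `Σ_i (D_{W Z_i} - D_{W' Z_i})` takes the same value on all choices of the
`Z_i ∈ ([n]-W-W' choose k-s)` on which the corresponding element of the free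
ℤ-module `⊕_{H ∈ ℋ} ℤ H` is the same. -/
def CondII (n k : ℕ) (D : Finset (Fin n) → ℝ) (ℋ : Set (Finset (Fin n))) : Prop :=
  ∀ q : ℕ, 1 ≤ q → q ≤ n - 1 → ∀ s : ℕ, s = 1 ∨ s = k - 1 →
    ∀ W W' : Finset (Fin n), W.card = s → W'.card = s →
    ∀ Z Z' : ℕ → Finset (Fin n),
      (∀ i < q, (Z i).card = k - s ∧ Disjoint (Z i) W ∧ Disjoint (Z i) W') →
      (∀ i < q, (Z' i).card = k - s ∧ Disjoint (Z' i) W ∧ Disjoint (Z' i) W') →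
      (∑ i ∈ Finset.range q, (hsum ℋ (W ∪ Z i) - hsum ℋ (W' ∪ Z i)) =
        ∑ i ∈ Finset.range q, (hsum ℋ (W ∪ Z' i) - hsum ℋ (W' ∪ Z' i))) →
      (∑ i ∈ Finset.range q, (D (W ∪ Z i) - D (W' ∪ Z i)) =
        ∑ i ∈ Finset.range q, (D (W ∪ Z' i) - D (W' ∪ Z' i)))

end FamHierarchy

section Pruning

namespace WTree

variable {α : Type} [Fintype α]

/-- The subtree of `T` induced on the vertex set `S` (as a graph on the ambient
vertex set). Pruning a cherry, i.e. contracting the twigs of its leaves, is realized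
by deleting the vertices of those twigs except the stalk. -/
def restrictG (T : WTree α) (S : Set T.V) : SimpleGraph T.V where
  Adj a b := T.G.Adj a b ∧ a ∈ S ∧ b ∈ S
  symm := ⟨fun _ _ h => ⟨h.1.symm, h.2.2, h.2.1⟩⟩
  loopless := ⟨fun _ h => T.G.irrefl h.1⟩

/-- Degree in the pruned tree. -/
def rdeg (T : WTree α) (S : Set T.V) (v : T.V) : ℕ :=
  ((T.restrictG S).neighborSet v).ncard

/-- Leaf of the pruned tree. -/
def rleaf (T : WTree α) (S : Set T.V) (v : T.V) : Prop := v ∈ S ∧ T.rdeg S v = 1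

/-- Node (vertex of degree `> 2`) of the pruned tree. -/
def rnode (T : WTree α) (S : Set T.V) (v : T.V) : Prop := v ∈ S ∧ 2 < T.rdeg S v

/-- Neighbours in the pruned tree: the path between them contains exactly one node. -/
def rnbr (T : WTree α) (S : Set T.V) (a b : T.V) : Prop :=
  a ≠ b ∧ ∃ p : (T.restrictG S).Walk a b, p.IsPath ∧
    (p.support.toFinset.filter (fun v => T.rnode S v)).card = 1

/-- Cherry of the pruned tree: a set of leaves any two of which are neighbours. -/
def rCherry (T : WTree α) (S : Set T.V) (C : Set T.V) : Prop :=
  (∀ v ∈ C, T.rleaf S v) ∧ ∀ a ∈ C, ∀ b ∈ C, a ≠ b → T.rnbr S a b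

/-- Complete cherry of the pruned tree. -/
def rCompleteCherry (T : WTree α) (S : Set T.V) (C : Set T.V) : Prop :=
  T.rCherry S C ∧ ∀ C' : Set T.V, T.rCherry S C' → ¬ C ⊂ C'

/-- The stalk of a cherry: the node lying on the path from any element of the cherry
to any node. -/
def rStalk (T : WTree α) (S : Set T.V) (C : Set T.V) (v : T.V) : Prop :=
  T.rnode S v ∧ ∀ a ∈ C, ∀ w : T.V, T.rnode S w →
    ∀ p : (T.restrictG S).Walk a w, p.IsPath → v ∈ p.support

/-- `v` is on the twig of the leaf `ℓ` in the pruned tree: `v` is not a node and lies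
on the path from `ℓ` to every node. -/
def rTwigVert (T : WTree α) (S : Set T.V) (ℓ v : T.V) : Prop :=
  v ∈ S ∧ ¬ T.rnode S v ∧ ∀ w : T.V, T.rnode S w →
    ∀ p : (T.restrictG S).Walk ℓ w, p.IsPath → v ∈ p.support

/-- The vertex set obtained by pruning the cherry `C` (contracting the twigs of its
leaves). -/
def pruneCherry (T : WTree α) (S : Set T.V) (C : Set T.V) : Set T.V :=
  S \ {v | ∃ ℓ ∈ C, T.rTwigVert S ℓ v}

/-- A good cherry: a complete cherry whose stalk is a leaf of the tree obtained by
pruning it. -/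
def rGoodCherry (T : WTree α) (S : Set T.V) (C : Set T.V) : Prop :=
  T.rCompleteCherry S C ∧ ∃ v : T.V, T.rStalk S C v ∧ T.rleaf (T.pruneCherry S C) v

/-- The leaf labelled `x` (of the original tree) descends from the leaf `y` of the
pruned tree: the path in the original tree from `x` to `y` contains no leaf of the
pruned tree other than `y`. -/
def descLeaf (T : WTree α) (S : Set T.V) (x : α) (y : T.V) : Prop :=
  T.rleaf S y ∧ ∀ p : T.G.Walk (T.label x) y, p.IsPath →
    ∀ v ∈ p.support, T.rleaf S v → v = y

/-- `∂C` : the set of labels descending from an element of `C`. -/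
def bdryV (T : WTree α) (S : Set T.V) (C : Set T.V) : Finset α :=
  Finset.univ.filter fun x => ∃ y ∈ C, T.descLeaf S x y

/-- One pruning step: prune all good cherries `C` with `#∂C ≤ r`. -/
def pruneStage (T : WTree α) (r : ℕ) (S : Set T.V) : Set T.V :=
  S \ {v | ∃ C : Set T.V, T.rGoodCherry S C ∧ (T.bdryV S C).card ≤ r ∧
    ∃ ℓ ∈ C, T.rTwigVert S ℓ v}

/-- The vertex set of `P^s`. -/
def stageSet (T : WTree α) (r : ℕ) : ℕ → Set T.V
  | 0 => Set.univ
  | s + 1 => T.pruneStage r (T.stageSet r s)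

/-- The hierarchy associated to the pseudostar `T` (with `r = n - k`): the sets `∂C`
for `C` a good cherry of some `P^s` with `#∂C ≤ r`; when `L(P^s)` is the union of two
complete cherries both with `#∂C_i ≤ r`, only the one whose `∂` contains the minimum
of `∂C₁ ∪ ∂C₂` is included. -/
def psHier [LinearOrder α] (T : WTree α) (r : ℕ) : Set (Finset α) :=
  {A | ∃ (s : ℕ) (C : Set T.V),
    T.rGoodCherry (T.stageSet r s) C ∧
    (T.bdryV (T.stageSet r s) C).card ≤ r ∧
    A = T.bdryV (T.stageSet r s) C ∧
    ∀ C₂ : Set T.V, T.rCompleteCherry (T.stageSet r s) C₂ →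
      (∀ v : T.V, T.rleaf (T.stageSet r s) v ↔ v ∈ C ∪ C₂) →
      (T.bdryV (T.stageSet r s) C₂).card ≤ r →
      ∃ m ∈ T.bdryV (T.stageSet r s) C,
        ∀ x ∈ T.bdryV (T.stageSet r s) C ∪ T.bdryV (T.stageSet r s) C₂, m ≤ x}

/-- The edge `e` belongs to the twig of the leaf `v` in the pruned tree on `S`. -/
def rOnTwigEdge (T : WTree α) (S : Set T.V) (v : T.V) (e : Sym2 T.V) : Prop :=
  e ∈ (T.restrictG S).edgeSet ∧ ∀ w : T.V, T.rnode S w →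
    ∀ p : (T.restrictG S).Walk v w, p.IsPath → e ∈ p.edges

end WTree

end Pruning
namespace BunAux

variable {V : Type}

lemma treeWeight_pair [Fintype V] {G : SimpleGraph V} (hG : G.IsTree) (w : Sym2 V → ℝ) {u v : V}
    (huv : u ≠ v) (p : G.Walk u v) (hp : p.IsPath) :
    treeWeight G w {u, v} = (p.edges.map w).sum := by
  classical
  have hcond : ∀ e : Sym2 V,
      (e ∈ G.edgeSet ∧ ∃ a ∈ ({u, v} : Finset V), ∃ b ∈ ({u, v} : Finset V),
        ∀ q : G.Walk a b, e ∈ q.edges) ↔ e ∈ p.edges := by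
    intro e
    constructor
    · rintro ⟨-, a, ha, b, hb, hq⟩
      simp only [Finset.mem_insert, Finset.mem_singleton] at ha hb
      rcases ha with rfl | rfl <;> rcases hb with rfl | rfl
      · simpa using hq SimpleGraph.Walk.nil
      · exact hq p
      · have := hq p.reverse
        rwa [SimpleGraph.Walk.edges_reverse, List.mem_reverse] at this
      · simpa using hq SimpleGraph.Walk.nil
    · intro he
      refine ⟨p.edges_subset_edgeSet he, u, by simp, v, by simp, ?_⟩
      intro q
      have hup : q.bypass.IsPath := q.bypass_isPath
      have := (hG.existsUnique_path u v).unique hup hp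
      exact q.edges_bypass_subset (this ▸ he)
  have h1 : treeWeight G w {u, v} = ∑ e ∈ (Finset.univ : Finset (Sym2 V)),
      if e ∈ p.edges then w e else 0 := by
    unfold treeWeight
    exact Finset.sum_congr rfl fun e _ => by rw [if_congr (hcond e) rfl rfl]
  rw [h1, ← Finset.sum_filter]
  have h2 : (Finset.univ.filter (fun e => e ∈ p.edges)) = p.edges.toFinset := by
    ext e; simp
  rw [h2, List.sum_toFinset _ hp.isTrail.edges_nodup]


variable {V : Type}

/-- `x` is an ancestor (iterate of `par`) of `u`. -/
def anc (par : V → V) (u x : V) : Prop := ∃ k : ℕ, par^[k] u = x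

section basic
variable {par : V → V} {dep : V → ℝ} {r : V}
variable (hr : par r = r) (hd : ∀ v, v ≠ r → dep (par v) < dep v)

lemma anc_refl (u : V) : anc par u u := ⟨0, rfl⟩

lemma anc_trans {u x y : V} (h1 : anc par u x) (h2 : anc par x y) : anc par u y := by
  obtain ⟨k, rfl⟩ := h1; obtain ⟨l, rfl⟩ := h2
  exact ⟨l + k, Function.iterate_add_apply par l k u⟩

lemma anc_step (u : V) : anc par u (par u) := ⟨1, rfl⟩

include hr in
lemma anc_of_r {x : V} (h : anc par r x) : x = r := by
  obtain ⟨k, rfl⟩ := h; exact Function.iterate_fixed hr k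

include hr hd in
lemma dep_par_le (v : V) : dep (par v) ≤ dep v := by
  by_cases h : v = r
  · subst h; rw [hr]
  · exact (hd v h).le

include hr hd in
lemma dep_anc_le {u x : V} (h : anc par u x) : dep x ≤ dep u := by
  obtain ⟨k, rfl⟩ := h
  induction k with
  | zero => simp
  | succ k ih =>
      rw [Function.iterate_succ_apply']
      exact le_trans (dep_par_le hr hd _) ih

include hr hd in
lemma anc_eq {x y : V} (h : anc par x y) (hle : dep x ≤ dep y) : x = y := by
  obtain ⟨k, rfl⟩ := h
  cases k with
  | zero => rfl
  | succ k =>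
      by_cases hx : x = r
      · subst hx; rw [Function.iterate_fixed hr]
      · exfalso
        have h1 : dep (par^[k+1] x) ≤ dep (par x) := by
          rw [Function.iterate_succ_apply]
          exact dep_anc_le hr hd ⟨k, rfl⟩
        have h2 := hd x hx
        linarith

lemma anc_comparable {u x y : V} (h1 : anc par u x) (h2 : anc par u y) :
    anc par x y ∨ anc par y x := by
  obtain ⟨k, rfl⟩ := h1; obtain ⟨l, rfl⟩ := h2
  rcases le_total k l with h | h
  · left; exact ⟨l - k, by rw [← Function.iterate_add_apply, Nat.sub_add_cancel h]⟩
  · right; exact ⟨k - l, by rw [← Function.iterate_add_apply, Nat.sub_add_cancel h]⟩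

include hd in
lemma reach_of_dec [Fintype V] (v : V) : ∃ k, par^[k] v = r := by
  suffices H : ∀ (N : ℕ) (v : V), (Finset.univ.filter (fun u => dep u < dep v)).card ≤ N →
      ∃ k, par^[k] v = r by
    exact H _ v le_rfl
  intro N
  induction N with
  | zero =>
      intro v hv
      by_cases h : v = r
      · exact ⟨0, h⟩
      · exfalso
        have : par v ∈ Finset.univ.filter (fun u => dep u < dep v) := by
          simp [hd v h]
        have := Finset.card_pos.mpr ⟨_, this⟩
        omega
  | succ N ih =>
      intro v hv
      by_cases h : v = r
      · exact ⟨0, h⟩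
      · have hsub : (Finset.univ.filter (fun u => dep u < dep (par v))) ⊆
            (Finset.univ.filter (fun u => dep u < dep v)).erase (par v) := by
          intro x hx
          simp only [Finset.mem_filter, Finset.mem_univ, true_and] at hx
          refine Finset.mem_erase.mpr ⟨?_, by simp [lt_trans hx (hd v h)]⟩
          rintro rfl; exact absurd hx (lt_irrefl _)
        have hcard : (Finset.univ.filter (fun u => dep u < dep (par v))).card ≤ N := by
          have h1 := Finset.card_le_card hsub
          have h2 : par v ∈ Finset.univ.filter (fun u => dep u < dep v) := by
            simp [hd v h]
          have h3 := Finset.card_erase_of_mem h2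
          omega
        obtain ⟨k, hk⟩ := ih (par v) hcard
        exact ⟨k + 1, by rwa [Function.iterate_add_apply, Function.iterate_one]⟩

end basic
section walkpart
open SimpleGraph
variable {G : SimpleGraph V} {par : V → V} {dep : V → ℝ} {r : V}

/-- The walk following `par` for `k` steps (stopping if at the fixed point `r`). -/
noncomputable def chainWalk (hr : par r = r) (hadj : ∀ v, v ≠ r → G.Adj v (par v)) :
    (k : ℕ) → (v : V) → G.Walk v (par^[k] v)
  | 0, _ => Walk.nil
  | (k + 1), v =>
      if h : v = r then
        Walk.nil.copy rfl (by rw [h, Function.iterate_fixed hr])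
      else
        (Walk.cons (hadj v h) (chainWalk hr hadj k (par v))).copy rfl
          (Function.iterate_succ_apply par k v).symm

variable (hr : par r = r) (hadj : ∀ v, v ≠ r → G.Adj v (par v))
    (hd : ∀ v, v ≠ r → dep (par v) < dep v)

lemma chainWalk_zero (v : V) : chainWalk hr hadj 0 v = Walk.nil := rfl

lemma chainWalk_succ (k : ℕ) (v : V) : chainWalk hr hadj (k + 1) v =
    if h : v = r then
      Walk.nil.copy rfl (by rw [h, Function.iterate_fixed hr])
    else
      (Walk.cons (hadj v h) (chainWalk hr hadj k (par v))).copy rfl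
        (Function.iterate_succ_apply par k v).symm := rfl

lemma chainWalk_support (k : ℕ) (v : V) :
    ∀ x ∈ (chainWalk hr hadj k v).support, anc par v x ∧ anc par x (par^[k] v) := by
  induction k generalizing v with
  | zero =>
      intro x hx
      rw [chainWalk_zero] at hx
      replace hx : x ∈ [v] := hx
      simp only [List.mem_singleton] at hx
      subst hx; exact ⟨anc_refl x, anc_refl x⟩
  | succ k ih =>
      intro x hx
      rw [chainWalk_succ] at hx
      by_cases h : v = r
      · rw [dif_pos h] at hx
        simp only [Walk.support_copy, Walk.support_nil, List.mem_singleton] at hx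
        subst hx
        refine ⟨⟨0, rfl⟩, ⟨k+1, ?_⟩⟩
        subst h; simp [Function.iterate_fixed hr]
      · rw [dif_neg h] at hx
        simp only [Walk.support_copy, Walk.support_cons, List.mem_cons] at hx
        rcases hx with rfl | hx
        · exact ⟨anc_refl x, ⟨k+1, rfl⟩⟩
        · obtain ⟨h1, h2⟩ := ih (par v) x hx
          refine ⟨anc_trans (anc_step v) h1, ?_⟩
          rw [Function.iterate_succ_apply]
          exact h2

include hd in
lemma chainWalk_isPath (k : ℕ) (v : V) : (chainWalk hr hadj k v).IsPath := by
  induction k generalizing v with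
  | zero => rw [chainWalk_zero]; exact Walk.IsPath.nil
  | succ k ih =>
      rw [chainWalk_succ]
      by_cases h : v = r
      · rw [dif_pos h, Walk.isPath_copy]; exact Walk.IsPath.nil
      · rw [dif_neg h, Walk.isPath_copy, Walk.cons_isPath_iff]
        refine ⟨ih (par v), ?_⟩
        intro hv
        have := (chainWalk_support hr hadj k (par v) v hv).1
        have h1 := dep_anc_le hr (fun x hx => hd x hx) this
        have h2 := hd v h
        linarith

lemma chainWalk_sum (w : Sym2 V → ℝ)
    (hw : ∀ v, v ≠ r → w s(v, par v) = dep v - dep (par v)) (k : ℕ) (v : V) :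
    (((chainWalk hr hadj k v).edges.map w)).sum = dep v - dep (par^[k] v) := by
  induction k generalizing v with
  | zero => rw [chainWalk_zero]; simp
  | succ k ih =>
      rw [chainWalk_succ]
      by_cases h : v = r
      · rw [dif_pos h]
        simp only [Walk.edges_copy, Walk.edges_nil, List.map_nil, List.sum_nil]
        rw [h, Function.iterate_fixed hr]
        ring
      · rw [dif_neg h]
        simp only [Walk.edges_copy, Walk.edges_cons, List.map_cons, List.sum_cons]
        rw [hw v h, ih (par v), Function.iterate_succ_apply]
        ring

end walkpart

section main
open SimpleGraph
variable {par : V → V} {dep : V → ℝ} {r : V}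

theorem chain_treeWeight [Fintype V] {G : SimpleGraph V} (hG : G.IsTree) (w : Sym2 V → ℝ)
    (hr : par r = r) (hadj : ∀ v, v ≠ r → G.Adj v (par v))
    (hd : ∀ v, v ≠ r → dep (par v) < dep v)
    (hw : ∀ v, v ≠ r → w s(v, par v) = dep v - dep (par v))
    {u v m : V} (huv : u ≠ v)
    (hum : anc par u m) (hvm : anc par v m)
    (hmax : ∀ x, anc par u x → anc par v x → dep x ≤ dep m) :
    treeWeight G w {u, v} = dep u + dep v - 2 * dep m := by
  obtain ⟨k1, hk1⟩ := hum
  obtain ⟨k2, hk2⟩ := hvm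
  set p : G.Walk u m := (chainWalk hr hadj k1 u).copy rfl hk1 with hp
  set q : G.Walk v m := (chainWalk hr hadj k2 v).copy rfl hk2 with hq
  have hpsup : ∀ x ∈ p.support, anc par u x ∧ anc par x m := by
    intro x hx
    rw [hp, Walk.support_copy] at hx
    have := chainWalk_support hr hadj k1 u x hx
    rwa [hk1] at this
  have hqsup : ∀ x ∈ q.support, anc par v x ∧ anc par x m := by
    intro x hx
    rw [hq, Walk.support_copy] at hx
    have := chainWalk_support hr hadj k2 v x hx
    rwa [hk2] at this
  have hppath : p.IsPath := by rw [hp, Walk.isPath_copy]; exact chainWalk_isPath hr hadj hd k1 u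
  have hqpath : q.reverse.IsPath := by
    apply SimpleGraph.Walk.IsPath.reverse
    rw [hq, Walk.isPath_copy]; exact chainWalk_isPath hr hadj hd k2 v
  have hW : (p.append q.reverse).IsPath := by
    rw [Walk.isPath_def, Walk.support_append]
    apply List.Nodup.append (hppath.2) (hqpath.2.tail)
    intro x hxp hxt
    have hx1 := hpsup x hxp
    have hx2 : x ∈ q.support := by
      have : x ∈ q.reverse.support := List.mem_of_mem_tail hxt
      rwa [Walk.support_reverse, List.mem_reverse] at this
    have hx3 := hqsup x hx2
    have hxm : x = m := anc_eq hr hd hx1.2 (hmax x hx1.1 hx3.1)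
    have : q.reverse.support = m :: q.reverse.support.tail := Walk.support_eq_cons _
    have hnd := hqpath.2
    rw [this, List.nodup_cons] at hnd
    exact hnd.1 (hxm ▸ hxt)
  rw [treeWeight_pair hG w huv _ hW]
  rw [Walk.edges_append, Walk.edges_reverse, List.map_append, List.sum_append,
    List.map_reverse, List.sum_reverse]
  rw [hp, hq, Walk.edges_copy, Walk.edges_copy]
  rw [chainWalk_sum hr hadj w hw k1 u, chainWalk_sum hr hadj w hw k2 v, hk1, hk2]
  ring

theorem chain_isTree [Fintype V]
    (hr : par r = r) (hd : ∀ v, v ≠ r → dep (par v) < dep v) :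
    (SimpleGraph.fromRel (fun a b => par a = b)).IsTree := by
  classical
  set G := SimpleGraph.fromRel (fun a b => par a = b) with hGdef
  have hadj : ∀ v, v ≠ r → G.Adj v (par v) := by
    intro v hv
    rw [hGdef, SimpleGraph.fromRel_adj]
    refine ⟨fun he => ?_, Or.inl rfl⟩
    · have := hd v hv; rw [← he] at this; exact absurd this (lt_irrefl _)
  have hnbr : ∀ (m y : V), G.Adj m y → dep y ≤ dep m → y = par m := by
    intro m y ha hy
    rw [hGdef, SimpleGraph.fromRel_adj] at ha
    rcases ha.2 with h | h
    · exact h.symm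
    · exfalso
      have hyr : y ≠ r := by
        rintro rfl
        exact ha.1 (by rw [← h, hr])
      have := hd y hyr
      rw [h] at this
      linarith
  haveI : Nonempty V := ⟨r⟩
  refine ⟨⟨?_⟩, ?_⟩
  · intro u v
    have h1 : G.Reachable u r := by
      obtain ⟨k, hk⟩ := reach_of_dec hd u
      exact ⟨(chainWalk hr hadj k u).copy rfl hk⟩
    have h2 : G.Reachable v r := by
      obtain ⟨k, hk⟩ := reach_of_dec hd v
      exact ⟨(chainWalk hr hadj k v).copy rfl hk⟩
    exact h1.trans h2.symm
  · intro v c hc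
    obtain ⟨m, hm, hmax⟩ := Finset.exists_max_image c.support.toFinset dep
      ⟨v, by simp [c.start_mem_support]⟩
    rw [List.mem_toFinset] at hm
    have hmax' : ∀ x ∈ c.support, dep x ≤ dep m := fun x hx =>
      hmax x (List.mem_toFinset.mpr hx)
    have hc' : (c.rotate m hm).IsCycle := hc.rotate hm
    have hedges : (c.rotate m hm).edges ~r c.edges := c.rotate_edges m hm
    cases h : c.rotate m hm with
    | nil => exact hc'.ne_nil h
    | @cons _ x _ ha q =>
      rw [h] at hc' hedges
      rw [Walk.cons_isCycle_iff] at hc'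
      have hxc : x ∈ c.support := by
        have : s(m, x) ∈ c.edges :=
          hedges.perm.mem_iff.mp (by simp)
        exact c.snd_mem_support_of_mem_edges this
      have hxpar : x = par m := hnbr m x ha (hmax' x hxc)
      cases h2 : q.reverse with
      | nil => exact ha.ne rfl
      | @cons _ y _ hb q2 =>
        have hmy : s(m, y) ∈ q.edges := by
          have : s(m, y) ∈ q.reverse.edges := by rw [h2]; simp
          rwa [Walk.edges_reverse, List.mem_reverse] at this
        have hyc : y ∈ c.support := by
          have : s(m, y) ∈ c.edges :=
            hedges.perm.mem_iff.mp (by simp [hmy])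
          exact c.snd_mem_support_of_mem_edges this
        have hypar : y = par m := hnbr m y hb (hmax' y hyc)
        apply hc'.2
        subst hxpar
        subst hypar
        exact hmy

end main

section fourpt
open SimpleGraph

lemma min_two_of_three {a b c : ℝ} (h1 : min a b ≤ c) (h2 : min a c ≤ b) (h3 : min b c ≤ a) :
    (a = b ∧ a ≤ c) ∨ (a = c ∧ a ≤ b) ∨ (b = c ∧ b ≤ a) := by
  rw [min_le_iff] at h1 h2 h3
  rcases h1 with h1 | h1 <;> rcases h2 with h2 | h2 <;> rcases h3 with h3 | h3 <;>
  first
    | exact Or.inl ⟨le_antisymm (by linarith) (by linarith), by linarith⟩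
    | exact Or.inr (Or.inl ⟨le_antisymm (by linarith) (by linarith), by linarith⟩)
    | exact Or.inr (Or.inr ⟨le_antisymm (by linarith) (by linarith), by linarith⟩)

variable {par : V → V} {dep : V → ℝ} {r : V}

lemma lca_min (hr : par r = r) (hd : ∀ v, v ≠ r → dep (par v) < dep v)
    {u v x ma mb mc : V}
    (hma1 : anc par u ma) (hma2 : anc par v ma)
    (hmb1 : anc par v mb) (hmb2 : anc par x mb)
    (hmc : ∀ y, anc par u y → anc par x y → dep y ≤ dep mc) :
    min (dep ma) (dep mb) ≤ dep mc := by
  rcases anc_comparable hma2 hmb1 with h | h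
  · exact le_trans (min_le_right _ _) (hmc mb (anc_trans hma1 h) hmb2)
  · exact le_trans (min_le_left _ _) (hmc ma hma1 (anc_trans hmb2 h))

/-- Any positively-weighted tree satisfies the four-point condition. -/
theorem tree_fourpoint [Fintype V] {G : SimpleGraph V} (hG : G.IsTree) (w : Sym2 V → ℝ)
    (hwpos : ∀ e ∈ G.edgeSet, 0 < w e) (i j k h : V)
    (hij : i ≠ j) (hik : i ≠ k) (hih : i ≠ h) (hjk : j ≠ k) (hjh : j ≠ h) (hkh : k ≠ h) :
    (treeWeight G w {i, j} + treeWeight G w {k, h} =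
        treeWeight G w {i, k} + treeWeight G w {j, h} ∧
      treeWeight G w {i, h} + treeWeight G w {k, j} ≤
        treeWeight G w {i, j} + treeWeight G w {k, h}) ∨
    (treeWeight G w {i, j} + treeWeight G w {k, h} =
        treeWeight G w {i, h} + treeWeight G w {k, j} ∧
      treeWeight G w {i, k} + treeWeight G w {j, h} ≤
        treeWeight G w {i, j} + treeWeight G w {k, h}) ∨
    (treeWeight G w {i, k} + treeWeight G w {j, h} =
        treeWeight G w {i, h} + treeWeight G w {k, j} ∧
      treeWeight G w {i, j} + treeWeight G w {k, h} ≤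
        treeWeight G w {i, k} + treeWeight G w {j, h}) := by
  classical
  -- set up the rooted structure at `h`
  set pth : (v : V) → G.Walk v h := fun v => (hG.existsUnique_path v h).choose with hpthdef
  have hpth : ∀ v, (pth v).IsPath := fun v => (hG.existsUnique_path v h).choose_spec.1
  have huniq : ∀ (v : V) (q : G.Walk v h), q.IsPath → q = pth v := fun v q hq =>
    (hG.existsUnique_path v h).choose_spec.2 q hq
  set par : V → V := fun v => (pth v).getVert 1 with hpardef
  set dep : V → ℝ := fun v => ((pth v).edges.map w).sum with hdepdef
  have hpth_h : pth h = Walk.nil := ((huniq h Walk.nil Walk.IsPath.nil)).symm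
  have hdep_h : dep h = 0 := by rw [hdepdef]; simp [hpth_h]
  have key : ∀ v, v ≠ h → ∃ (ha : G.Adj v (par v)), pth v = Walk.cons ha (pth (par v)) := by
    intro v hv
    cases hpv : pth v with
    | nil => exact absurd rfl hv
    | @cons _ y _ ha q =>
        have hq : q.IsPath := by
          have := hpth v; rw [hpv, Walk.cons_isPath_iff] at this; exact this.1
        have hqy : q = pth y := huniq y q hq
        subst hqy
        have hpar : par v = y := by
          rw [hpardef]; simp only [hpv, Walk.getVert_cons_succ, Walk.getVert_zero]
        subst hpar
        exact ⟨ha, rfl⟩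
  have hr : par h = h := by rw [hpardef]; simp only [hpth_h]; rfl
  have hd : ∀ v, v ≠ h → dep (par v) < dep v := by
    intro v hv
    obtain ⟨ha, hcons⟩ := key v hv
    have : dep v = w s(v, par v) + dep (par v) := by
      rw [hdepdef]; simp only [hcons, Walk.edges_cons, List.map_cons, List.sum_cons]
    have hwp : 0 < w s(v, par v) := hwpos _ ((SimpleGraph.mem_edgeSet G).mpr ha)
    linarith
  have hadj : ∀ v, v ≠ h → G.Adj v (par v) := fun v hv => (key v hv).choose
  have hw : ∀ v, v ≠ h → w s(v, par v) = dep v - dep (par v) := by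
    intro v hv
    obtain ⟨ha, hcons⟩ := key v hv
    have : dep v = w s(v, par v) + dep (par v) := by
      rw [hdepdef]; simp only [hcons, Walk.edges_cons, List.map_cons, List.sum_cons]
    linarith
  -- lcas
  have hanc_r0 : ∀ v, anc par v h := fun v =>
    ⟨(reach_of_dec hd v).choose, (reach_of_dec hd v).choose_spec⟩
  have lca : ∀ a b : V, ∃ m, anc par a m ∧ anc par b m ∧
      ∀ x, anc par a x → anc par b x → dep x ≤ dep m := by
    intro a b
    have hrmem : h ∈ Finset.univ.filter (fun x => anc par a x ∧ anc par b x) := by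
      simp only [Finset.mem_filter, Finset.mem_univ, true_and]
      exact ⟨hanc_r0 a, hanc_r0 b⟩
    obtain ⟨m, hm, hmax⟩ := Finset.exists_max_image
      (Finset.univ.filter (fun x => anc par a x ∧ anc par b x)) dep ⟨h, hrmem⟩
    simp only [Finset.mem_filter, Finset.mem_univ, true_and] at hm
    exact ⟨m, hm.1, hm.2, fun x hx1 hx2 => hmax x (by simp [hx1, hx2])⟩
  obtain ⟨mij, hmij1, hmij2, hmij3⟩ := lca i j
  obtain ⟨mik, hmik1, hmik2, hmik3⟩ := lca i k
  obtain ⟨mjk, hmjk1, hmjk2, hmjk3⟩ := lca j k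
  have tw : ∀ (a b m : V), a ≠ b → anc par a m → anc par b m →
      (∀ x, anc par a x → anc par b x → dep x ≤ dep m) →
      treeWeight G w {a, b} = dep a + dep b - 2 * dep m := fun a b m hab h1 h2 h3 =>
    chain_treeWeight hG w hr hadj hd hw hab h1 h2 h3
  have tw_r : ∀ a : V, a ≠ h → treeWeight G w {a, h} = dep a := by
    intro a ha
    have := tw a h h ha (hanc_r0 a) (anc_refl h) (fun x _ hx => by
      rw [anc_of_r hr hx])
    rw [this, hdep_h]; ring
  rw [tw i j mij hij hmij1 hmij2 hmij3, tw i k mik hik hmik1 hmik2 hmik3,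
    tw k j mjk (Ne.symm hjk) hmjk2 hmjk1 (fun x h1 h2 => hmjk3 x h2 h1), tw_r k hkh, tw_r j hjh, tw_r i hih]
  have m1 : min (dep mij) (dep mik) ≤ dep mjk :=
    lca_min hr hd hmij2 hmij1 hmik1 hmik2 hmjk3
  have m2 : min (dep mij) (dep mjk) ≤ dep mik :=
    lca_min hr hd hmij1 hmij2 hmjk1 hmjk2 hmik3
  have m3 : min (dep mik) (dep mjk) ≤ dep mij :=
    lca_min hr hd hmik1 hmik2 hmjk2 hmjk1 hmij3
  rcases min_two_of_three m1 m2 m3 with ⟨he, hle⟩ | ⟨he, hle⟩ | ⟨he, hle⟩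
  · exact Or.inl ⟨by linarith, by linarith⟩
  · exact Or.inr (Or.inl ⟨by linarith, by linarith⟩)
  · exact Or.inr (Or.inr ⟨by linarith, by linarith⟩)

end fourpt
section construct
open SimpleGraph

theorem construct (n : ℕ) (hn : 0 < n) (D : Finset (Fin n) → ℝ)
    (hpos : ∀ I : Finset (Fin n), I.card = 2 → 0 < D I)
    (htri : ∀ i j k : Fin n, i ≠ j → j ≠ k → i ≠ k →
      D {i, j} ≤ D {i, k} + D {k, j})
    (H4 : ∀ i j k h : Fin n, i ≠ j → i ≠ k → i ≠ h → j ≠ k → j ≠ h → k ≠ h →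
        ((D {i, j} + D {k, h} = D {i, k} + D {j, h} ∧
            D {i, h} + D {k, j} ≤ D {i, j} + D {k, h}) ∨
         (D {i, j} + D {k, h} = D {i, h} + D {k, j} ∧
            D {i, k} + D {j, h} ≤ D {i, j} + D {k, h}) ∨
         (D {i, k} + D {j, h} = D {i, h} + D {k, j} ∧
            D {i, j} + D {k, h} ≤ D {i, k} + D {j, h}))) :
    ∃ (V : Type) (_ : Fintype V) (G : SimpleGraph V) (w : Sym2 V → ℝ) (f : Fin n → V),
      G.IsTree ∧ Function.Injective f ∧ (∀ e ∈ G.edgeSet, 0 < w e) ∧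
      ∀ I : Finset (Fin n), I.card = 2 → treeWeight G w (I.image f) = D I := by
  classical
  set z : Fin n := ⟨0, hn⟩ with hz
  have hDsym : ∀ a b : Fin n, D {a, b} = D {b, a} := fun a b => by rw [Finset.pair_comm]
  have hDpos : ∀ a b : Fin n, a ≠ b → 0 < D {a, b} := fun a b h =>
    hpos _ (Finset.card_pair h)
  set g : Fin n → Fin n → ℝ := fun i j => (D {z, i} + D {z, j} - D {i, j}) / 2 with hg
  have hg_sym : ∀ i j, g i j = g j i := by
    intro i j; rw [hg]; simp only; rw [Finset.pair_comm i j]; ring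
  have hg_nonneg : ∀ i j, i ≠ z → j ≠ z → i ≠ j → 0 ≤ g i j := by
    intro i j hi hj hij
    have := htri i j z hij hj hi
    rw [hg]; simp only
    rw [hDsym i z] at this
    linarith
  have hg_le : ∀ i j, i ≠ z → j ≠ z → i ≠ j → g i j ≤ D {z, i} := by
    intro i j hi hj hij
    have := htri z j i (Ne.symm hj) hij.symm (Ne.symm hi)
    rw [hg]; simp only
    linarith
  have htwo : ∀ i j k : Fin n, i ≠ z → j ≠ z → k ≠ z → i ≠ j → j ≠ k → i ≠ k →
      min (g i j) (g j k) ≤ g i k := by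
    intro i j k hi hj hk hij hjk hik
    have h4 := H4 z i j k (Ne.symm hi) (Ne.symm hj) (Ne.symm hk) hij hik hjk
    rw [hg]; simp only
    rw [min_le_iff]
    rcases h4 with ⟨h, h'⟩ | ⟨h, h'⟩ | ⟨h, h'⟩
    · right; rw [hDsym j i] at *; linarith
    · right; rw [hDsym j i] at *; linarith
    · left; rw [hDsym j i] at *; linarith
  -- the raw pointed type and the equivalence
  set dep0 : Fin n × Fin n → ℝ := fun x =>
    if x.1 = z ∨ x.2 = z then 0 else if x.1 = x.2 then D {z, x.1} else g x.1 x.2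
    with hdep0
  have hdep0_nonneg : ∀ x, 0 ≤ dep0 x := by
    intro x
    rw [hdep0]; simp only
    split_ifs with h1 h2
    · exact le_refl 0
    · push_neg at h1
      exact (hDpos z x.1 (Ne.symm h1.1)).le
    · push_neg at h1
      exact hg_nonneg x.1 x.2 h1.1 h1.2 h2
  have hdep0_zero : ∀ x : Fin n × Fin n, x.1 = z ∨ x.2 = z → dep0 x = 0 := by
    intro x h; rw [hdep0]; simp only [if_pos h]
  have hdep0_ne : ∀ x : Fin n × Fin n, 0 < dep0 x → x.1 ≠ z ∧ x.2 ≠ z := by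
    intro x hx
    by_contra h
    push_neg at h
    rcases Classical.em (x.1 = z) with h1 | h1
    · rw [hdep0_zero x (Or.inl h1)] at hx; linarith
    · rw [hdep0_zero x (Or.inr (h h1))] at hx; linarith
  have hdep0_leaf : ∀ i : Fin n, i ≠ z → dep0 (i, i) = D {z, i} := by
    intro i hi; rw [hdep0]; simp [hi]
  have hdep0_g : ∀ i j : Fin n, i ≠ z → j ≠ z → i ≠ j → dep0 (i, j) = g i j := by
    intro i j hi hj hij; rw [hdep0]; simp [hi, hj, hij]
  set srel : Fin n × Fin n → Fin n × Fin n → Prop := fun x y =>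
    dep0 x = dep0 y ∧ (dep0 x ≤ 0 ∨ dep0 x ≤ g x.1 y.1 ∨ x.1 = y.1) with hsrel
  have hsrel_refl : ∀ x, srel x x := fun x => ⟨rfl, Or.inr (Or.inr rfl)⟩
  have hsrel_symm : ∀ x y, srel x y → srel y x := by
    rintro x y ⟨h1, h2⟩
    refine ⟨h1.symm, ?_⟩
    rcases h2 with h | h | h
    · exact Or.inl (h1 ▸ h)
    · exact Or.inr (Or.inl (by rw [← h1, hg_sym y.1 x.1]; exact h))
    · exact Or.inr (Or.inr h.symm)
  have hsrel_trans : ∀ x y u, srel x y → srel y u → srel x u := by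
    rintro x y u ⟨h1, h2⟩ ⟨h3, h4⟩
    refine ⟨h1.trans h3, ?_⟩
    by_cases ht : dep0 x ≤ 0
    · exact Or.inl ht
    push_neg at ht
    have hx1 : x.1 ≠ z := (hdep0_ne x ht).1
    have hy1 : y.1 ≠ z := (hdep0_ne y (by rwa [← h1])).1
    have hu1 : u.1 ≠ z := (hdep0_ne u (by rw [← h3, ← h1]; exact ht)).1
    rcases h2 with h2 | h2 | h2
    · exact Or.inl h2
    · rcases h4 with h4 | h4 | h4
      · rw [← h1] at h4; exact Or.inl h4
      · by_cases hxy : x.1 = y.1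
        · rw [hxy]; exact Or.inr (Or.inl (h1 ▸ h4))
        by_cases hyu : y.1 = u.1
        · rw [← hyu]; exact Or.inr (Or.inl h2)
        by_cases hxu : x.1 = u.1
        · exact Or.inr (Or.inr hxu)
        · refine Or.inr (Or.inl ?_)
          have := htwo x.1 y.1 u.1 hx1 hy1 hu1 hxy hyu hxu
          have hb : dep0 x ≤ min (g x.1 y.1) (g y.1 u.1) :=
            le_min h2 (h1 ▸ h4)
          exact le_trans hb this
      · rw [← h4]; exact Or.inr (Or.inl h2)
    · rcases h4 with h4 | h4 | h4
      · rw [← h1] at h4; exact Or.inl h4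
      · rw [h2]; exact Or.inr (Or.inl (h1 ▸ h4))
      · exact Or.inr (Or.inr (h2.trans h4))
  set sE : Setoid (Fin n × Fin n) := ⟨srel, hsrel_refl, fun {a b} => hsrel_symm a b,
    fun {a b c} => hsrel_trans a b c⟩ with hsE
  set VQ := Quotient sE with hVQ
  haveI : Fintype VQ := @Quotient.fintype _ _ sE (fun _ _ => Classical.propDecidable _)
  set dep : VQ → ℝ := Quotient.lift dep0 (fun a b h => h.1) with hdep
  have hdepmk : ∀ x : Fin n × Fin n, dep (Quotient.mk sE x) = dep0 x := fun x => rfl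
  set rt : VQ := Quotient.mk sE (z, z) with hrt
  have hdeprt : dep rt = 0 := by
    rw [hrt, hdepmk]; exact hdep0_zero _ (Or.inl rfl)
  have hdep_nonneg : ∀ c : VQ, 0 ≤ dep c := by
    intro c; induction c using Quotient.ind with | _ x => exact hdep0_nonneg x
  have hzero_rt : ∀ c : VQ, dep c ≤ 0 → c = rt := by
    intro c hc
    induction c using Quotient.ind with | _ x =>
    refine Quotient.sound ?_
    have hx0 : dep0 x = 0 := le_antisymm hc (hdep0_nonneg x)
    exact ⟨by rw [hx0, hdep0_zero (z,z) (Or.inl rfl)], Or.inl (le_of_eq hx0)⟩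
  -- branches
  set onB : Fin n → VQ → Prop := fun i c => ∃ l, c = Quotient.mk sE (i, l) with honB
  have hBdet : ∀ (i : Fin n) (l l' : Fin n), dep0 (i, l) = dep0 (i, l') →
      (Quotient.mk sE (i, l) : VQ) = Quotient.mk sE (i, l') :=
    fun i l l' h => Quotient.sound ⟨h, Or.inr (Or.inr rfl)⟩
  set S : Fin n → Finset ℝ := fun i => Finset.image (fun l => dep0 (i, l)) Finset.univ
    with hS
  have hS_zero : ∀ i, (0:ℝ) ∈ S i := by
    intro i
    rw [hS]
    simp only [Finset.mem_image]
    exact ⟨z, Finset.mem_univ z, hdep0_zero (i, z) (Or.inr rfl)⟩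
  have hS_mem : ∀ i t, t ∈ S i → ∃ l, dep0 (i, l) = t := by
    intro i t ht
    rw [hS] at ht
    simp only [Finset.mem_image] at ht
    obtain ⟨l, _, hl⟩ := ht
    exact ⟨l, hl⟩
  -- branch coherence
  have hcoh : ∀ i i' : Fin n, i ≠ z → i' ≠ z → i ≠ i' → ∀ t s', s' < t → t ≤ g i i' →
      s' ∈ S i → s' ∈ S i' := by
    intro i i' hi hi' hii' t s' hst htg hmem
    obtain ⟨l, hl⟩ := hS_mem i s' hmem
    by_cases hs0 : s' ≤ 0
    · have : s' = 0 := le_antisymm hs0 (hl ▸ hdep0_nonneg (i, l))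
      rw [this]; exact hS_zero i'
    push_neg at hs0
    have hlz : l ≠ z := by
      intro h
      rw [h, hdep0_zero (i, z) (Or.inr rfl)] at hl
      linarith
    have hli : l ≠ i := by
      intro h
      rw [h, hdep0_leaf i hi] at hl
      have := hg_le i i' hi hi' hii'
      linarith
    rw [hdep0_g i l hi hlz (Ne.symm hli)] at hl
    have hli' : l ≠ i' := by
      intro h
      rw [h] at hl
      linarith
    -- show g i' l = s'
    have h1 : min (g i' i) (g i l) ≤ g i' l :=
      htwo i' i l hi' hi hlz (Ne.symm hii') hli.symm (Ne.symm hli')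
    have h2 : min (g i' l) (g l i) ≤ g i' i :=
      htwo i' l i hi' hlz hi hli'.symm hli (Ne.symm hii')
    have h3 : min (g i i') (g i' l) ≤ g i l :=
      htwo i i' l hi hi' hlz hii' hli'.symm hli.symm
    have hgii' : s' < g i i' := lt_of_lt_of_le hst htg
    rw [hg_sym i' i] at h1
    have hge : s' ≤ g i' l := by
      rcases min_le_iff.mp h1 with h | h
      · linarith
      · linarith [hl]
    have hle2 : g i' l ≤ s' := by
      rcases min_le_iff.mp h3 with h | h
      · linarith
      · linarith [hl]
    have : g i' l = s' := le_antisymm hle2 hge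
    rw [hS]
    simp only [Finset.mem_image]
    exact ⟨l, Finset.mem_univ l, by
      rw [hdep0_g i' l hi' hlz (Ne.symm hli')]; exact this⟩
  -- vertices on two branches at the same small depth coincide
  have hsame : ∀ (i i' l l' : Fin n), dep0 (i, l) = dep0 (i', l') →
      (dep0 (i, l) ≤ 0 ∨ dep0 (i, l) ≤ g i i' ∨ i = i') →
      (Quotient.mk sE (i, l) : VQ) = Quotient.mk sE (i', l') :=
    fun i i' l l' h1 h2 => Quotient.sound ⟨h1, h2⟩
  -- the parent function
  have par_exists : ∀ c : VQ, ∃ p : VQ,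
      (dep c ≤ 0 → p = c) ∧
      (0 < dep c → dep p < dep c ∧
        ∀ i : Fin n, i ≠ z → onB i c → (onB i p ∧
          ∀ c' : VQ, onB i c' → dep c' < dep c → dep c' ≤ dep p)) := by
    intro c
    by_cases hc : dep c ≤ 0
    · exact ⟨c, fun _ => rfl, fun h => absurd hc (not_le.mpr h)⟩
    push_neg at hc
    obtain ⟨x, hx⟩ : ∃ x, Quotient.mk sE x = c := ⟨c.out, Quotient.out_eq c⟩
    have hdep0x : dep0 x = dep c := by rw [← hx, hdepmk]
    have hi0 : x.1 ≠ z := (hdep0_ne x (by rw [hdep0x]; exact hc)).1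
    set F : Finset ℝ := (S x.1).filter (· < dep c) with hF
    have hFne : F.Nonempty := ⟨0, by
      rw [hF, Finset.mem_filter]; exact ⟨hS_zero x.1, hc⟩⟩
    set s : ℝ := F.max' hFne with hsdef
    have hsF : s ∈ F := F.max'_mem hFne
    have hsS : s ∈ S x.1 := (Finset.mem_filter.mp hsF).1
    have hslt : s < dep c := by
      have := (Finset.mem_filter.mp hsF).2; simpa using this
    obtain ⟨l0, hl0⟩ := hS_mem x.1 s hsS
    refine ⟨Quotient.mk sE (x.1, l0), fun h => absurd h (not_le.mpr hc), fun _ => ?_⟩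
    have hdepp : dep (Quotient.mk sE (x.1, l0)) = s := by rw [hdepmk, hl0]
    refine ⟨by rw [hdepp]; exact hslt, ?_⟩
    intro i hiz hBc
    obtain ⟨l, hl⟩ := hBc
    have hrel : srel (i, l) x := Quotient.exact (hl.symm.trans hx.symm)
    have hdep0il : dep0 (i, l) = dep c := by rw [hrel.1, hdep0x]
    have hii0 : dep c ≤ g i x.1 ∨ i = x.1 := by
      rcases hrel.2 with h | h | h
      · rw [hdep0il] at h; exact absurd hc (not_lt.mpr h)
      · rw [hdep0il] at h; exact Or.inl h
      · exact Or.inr h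
    have hAB : ∀ s'' : ℝ, s'' < dep c → (s'' ∈ S x.1 ↔ s'' ∈ S i) := by
      intro s'' hs''
      by_cases hii : i = x.1
      · rw [hii]
      have hgle : dep c ≤ g i x.1 := hii0.resolve_right hii
      constructor
      · intro hmem
        exact hcoh x.1 i hi0 hiz (fun hh => hii hh.symm) (dep c) s'' hs''
          (by rw [hg_sym]; exact hgle) hmem
      · intro hmem
        exact hcoh i x.1 hiz hi0 hii (dep c) s'' hs'' hgle hmem
    constructor
    · have hsi : s ∈ S i := (hAB s hslt).mp hsS
      obtain ⟨l1, hl1⟩ := hS_mem i s hsi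
      refine ⟨l1, ?_⟩
      refine hsame x.1 i l0 l1 (by rw [hl0, hl1]) ?_
      by_cases hs0 : dep0 (x.1, l0) ≤ 0
      · exact Or.inl hs0
      rcases hii0 with h | h
      · refine Or.inr (Or.inl ?_)
        rw [hl0, hg_sym x.1 i]
        exact le_trans hslt.le h
      · exact Or.inr (Or.inr h.symm)
    · intro c' hBc' hdepc'
      obtain ⟨l', hl'⟩ := hBc'
      have h1 : dep c' ∈ S i := by
        rw [hS]
        simp only [Finset.mem_image]
        exact ⟨l', Finset.mem_univ l', by rw [hl', hdepmk]⟩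
      have h2 : dep c' ∈ S x.1 := (hAB _ hdepc').mpr h1
      have h3 : dep c' ∈ F := by rw [hF, Finset.mem_filter]; exact ⟨h2, hdepc'⟩
      rw [hdepp]
      exact F.le_max' _ h3
  set par : VQ → VQ := fun c => (par_exists c).choose with hpardef
  have parspec : ∀ c : VQ,
      (dep c ≤ 0 → par c = c) ∧
      (0 < dep c → dep (par c) < dep c ∧
        ∀ i : Fin n, i ≠ z → onB i c → (onB i (par c) ∧
          ∀ c' : VQ, onB i c' → dep c' < dep c → dep c' ≤ dep (par c))) :=
    fun c => (par_exists c).choose_spec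
  have hpar_rt : par rt = rt := (parspec rt).1 (le_of_eq hdeprt)
  have hdd : ∀ c : VQ, c ≠ rt → dep (par c) < dep c := by
    intro c hcrt
    rcases (hdep_nonneg c).lt_or_eq with h | h
    · exact ((parspec c).2 h).1
    · exact absurd (hzero_rt c (le_of_eq h.symm)) hcrt
  have honB_par : ∀ i, i ≠ z → ∀ c, onB i c → onB i (par c) := by
    intro i hi c hB
    by_cases hc : dep c ≤ 0
    · rw [(parspec c).1 hc]; exact hB
    · exact (((parspec c).2 (not_le.mp hc)).2 i hi hB).1
  have honB_anc : ∀ i, i ≠ z → ∀ (c x' : VQ), onB i c → anc par c x' → onB i x' := by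
    intro i hi c x' hB hanc
    obtain ⟨k, hk⟩ := hanc
    rw [← hk]
    clear hk
    induction k generalizing c with
    | zero => exact hB
    | succ k ih =>
        rw [Function.iterate_succ_apply]
        exact ih (par c) (honB_par i hi c hB)
  have hanc_branch : ∀ i, i ≠ z → ∀ (c c' : VQ), onB i c → onB i c' →
      dep c' ≤ dep c → anc par c c' := by
    intro i hi c c' hB hB' hle
    have hdet : ∀ (a b : VQ), onB i a → onB i b → dep a = dep b → a = b := by
      rintro a b ⟨la, rfl⟩ ⟨lb, rfl⟩ hab
      exact hBdet i la lb (by rw [← hdepmk, ← hdepmk, hab])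
    suffices H : ∀ (N : ℕ) (c : VQ), (Finset.univ.filter (fun u => dep u < dep c)).card ≤ N →
        onB i c → dep c' ≤ dep c → anc par c c' by
      exact H _ c le_rfl hB hle
    intro N
    induction N with
    | zero =>
        intro c hcard hB hle
        rcases hle.lt_or_eq with h | h
        · exfalso
          have : c' ∈ Finset.univ.filter (fun u => dep u < dep c) := by simp [h]
          have := Finset.card_pos.mpr ⟨_, this⟩
          omega
        · exact (hdet c c' hB hB' h.symm) ▸ anc_refl c
    | succ N ih =>
        intro c hcard hB hle
        rcases hle.lt_or_eq with h | h
        · have hcpos : 0 < dep c := lt_of_le_of_lt (hdep_nonneg c') h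
          have hspec := ((parspec c).2 hcpos).2 i hi hB
          have hple : dep c' ≤ dep (par c) := hspec.2 c' hB' h
          have hpdec : dep (par c) < dep c := ((parspec c).2 hcpos).1
          have hsub : (Finset.univ.filter (fun u => dep u < dep (par c))) ⊆
              (Finset.univ.filter (fun u => dep u < dep c)).erase (par c) := by
            intro y hy
            simp only [Finset.mem_filter, Finset.mem_univ, true_and] at hy
            refine Finset.mem_erase.mpr ⟨?_, by simp [lt_trans hy hpdec]⟩
            rintro rfl; exact absurd hy (lt_irrefl _)
          have hcard2 : (Finset.univ.filter (fun u => dep u < dep (par c))).card ≤ N := by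
            have h1 := Finset.card_le_card hsub
            have h2 : par c ∈ Finset.univ.filter (fun u => dep u < dep c) := by
              simp [hpdec]
            have h3 := Finset.card_erase_of_mem h2
            omega
          obtain ⟨k, hk⟩ := ih (par c) hcard2 hspec.1 hple
          exact ⟨k + 1, by rwa [Function.iterate_add_apply, Function.iterate_one]⟩
        · exact (hdet c c' hB hB' h.symm) ▸ anc_refl c
  -- the graph, weights and leaf map
  set G : SimpleGraph VQ := SimpleGraph.fromRel (fun a b => par a = b) with hGdef
  have hG : G.IsTree := chain_isTree hpar_rt hdd
  have hadjG : ∀ v : VQ, v ≠ rt → G.Adj v (par v) := by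
    intro v hv
    rw [hGdef, SimpleGraph.fromRel_adj]
    refine ⟨fun he => ?_, Or.inl rfl⟩
    have := hdd v hv; rw [← he] at this; exact absurd this (lt_irrefl _)
  set w : Sym2 VQ → ℝ :=
    Sym2.lift ⟨fun a b => |dep a - dep b|, fun a b => abs_sub_comm _ _⟩ with hwdef
  have hwmk : ∀ a b : VQ, w s(a, b) = |dep a - dep b| := by
    intro a b
    rw [hwdef, Sym2.lift_mk]
  have hw : ∀ v : VQ, v ≠ rt → w s(v, par v) = dep v - dep (par v) := by
    intro v hv
    rw [hwmk]
    exact abs_of_pos (by linarith [hdd v hv])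
  have hwpos : ∀ e ∈ G.edgeSet, 0 < w e := by
    intro e he
    induction e using Sym2.ind with | _ a b =>
    rw [SimpleGraph.mem_edgeSet, hGdef, SimpleGraph.fromRel_adj] at he
    rw [hwmk]
    rcases he.2 with h | h
    · have ha : a ≠ rt := by
        rintro rfl; exact he.1 (by rw [← h, hpar_rt])
      have := hdd a ha
      rw [h] at this
      rw [abs_pos]
      intro hc
      rw [sub_eq_zero] at hc
      rw [hc] at this
      exact absurd this (lt_irrefl _)
    · have hb : b ≠ rt := by
        rintro rfl; exact he.1 (by rw [← h, hpar_rt])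
      have := hdd b hb
      rw [h] at this
      rw [abs_pos]
      intro hc
      rw [sub_eq_zero] at hc
      rw [hc] at this
      exact absurd this (lt_irrefl _)
  set f : Fin n → VQ := fun i => if i = z then rt else Quotient.mk sE (i, i) with hf
  have hf_z : f z = rt := by rw [hf]; simp
  have hf_ne : ∀ i, i ≠ z → f i = Quotient.mk sE (i, i) := by
    intro i hi; rw [hf]; simp [hi]
  have hdepleaf : ∀ i, i ≠ z → dep (f i) = D {z, i} := by
    intro i hi
    rw [hf_ne i hi, hdepmk, hdep0_leaf i hi]
  have hfinj : Function.Injective f := by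
    intro a b hab
    by_contra hne
    by_cases haz : a = z
    · subst haz
      have hbz : b ≠ z := fun h => hne h.symm
      have : dep (f b) = 0 := by rw [← hab, hf_z, hdeprt]
      rw [hdepleaf b hbz] at this
      exact absurd this (ne_of_gt (hDpos z b (Ne.symm hbz)))
    by_cases hbz : b = z
    · subst hbz
      have : dep (f a) = 0 := by rw [hab, hf_z, hdeprt]
      rw [hdepleaf a haz] at this
      exact absurd this (ne_of_gt (hDpos z a (Ne.symm haz)))
    · rw [hf_ne a haz, hf_ne b hbz] at hab
      have hrel := Quotient.exact hab
      have h1 : dep0 (a, a) = dep0 (b, b) := hrel.1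
      rw [hdep0_leaf a haz, hdep0_leaf b hbz] at h1
      have hpos' : 0 < dep0 (a, a) := by rw [hdep0_leaf a haz]; exact hDpos z a (Ne.symm haz)
      rcases hrel.2 with h | h | h
      · exact absurd hpos' (not_lt.mpr h)
      · simp only at h
        rw [hdep0_leaf a haz, hg] at h
        simp only at h
        have := hDpos a b hne
        linarith
      · exact hne h
  -- ancestor facts for leaves
  have hanc_rt : ∀ c : VQ, anc par c rt := fun c => reach_of_dec hdd c
  have hlca_leaf : ∀ i j : Fin n, i ≠ z → j ≠ z → i ≠ j →
      anc par (f i) (Quotient.mk sE (i, j)) ∧ anc par (f j) (Quotient.mk sE (i, j)) ∧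
      ∀ x : VQ, anc par (f i) x → anc par (f j) x →
        dep x ≤ dep (Quotient.mk sE (i, j)) := by
    intro i j hi hj hij
    have hdm : dep (Quotient.mk sE (i, j) : VQ) = g i j := by
      rw [hdepmk, hdep0_g i j hi hj hij]
    have hBi : onB i (Quotient.mk sE (i, j)) := ⟨j, rfl⟩
    have hBj : onB j (Quotient.mk sE (i, j)) := by
      refine ⟨i, ?_⟩
      refine hsame i j j i ?_ ?_
      · rw [hdep0_g i j hi hj hij, hdep0_g j i hj hi (Ne.symm hij), hg_sym]
      · exact Or.inr (Or.inl (by rw [hdep0_g i j hi hj hij]))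
    have hBfi : onB i (f i) := ⟨i, hf_ne i hi⟩
    have hBfj : onB j (f j) := ⟨j, hf_ne j hj⟩
    refine ⟨?_, ?_, ?_⟩
    · apply hanc_branch i hi _ _ hBfi hBi
      rw [hdm, hdepleaf i hi]
      exact hg_le i j hi hj hij
    · apply hanc_branch j hj _ _ hBfj hBj
      rw [hdm, hdepleaf j hj]
      rw [hg_sym]
      exact hg_le j i hj hi (Ne.symm hij)
    · intro x hxi hxj
      have hxBi : onB i x := honB_anc i hi _ _ hBfi hxi
      have hxBj : onB j x := honB_anc j hj _ _ hBfj hxj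
      obtain ⟨li, hli⟩ := hxBi
      obtain ⟨lj, hlj⟩ := hxBj
      rw [hdm]
      by_cases hx0 : dep x ≤ 0
      · exact le_trans hx0 (hg_nonneg i j hi hj hij)
      push_neg at hx0
      have hrel := Quotient.exact (hli.symm.trans hlj)
      rcases hrel.2 with h | h | h
      · rw [← hdepmk, ← hli] at h
        exact absurd hx0 (not_lt.mpr h)
      · simp only at h
        rw [← hdepmk, ← hli] at h
        exact h
      · exact absurd h hij
  -- lca with the root
  have hlca_rt : ∀ u : VQ, ∀ x : VQ, anc par rt x → dep x ≤ dep rt := by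
    intro u x hx
    rw [anc_of_r hpar_rt hx, hdeprt]
  -- realization
  refine ⟨VQ, inferInstance, G, w, f, hG, hfinj, hwpos, ?_⟩
  intro I hI
  obtain ⟨i, j, hij, rfl⟩ := Finset.card_eq_two.mp hI
  simp only [Finset.image_insert, Finset.image_singleton]
  have hfij : f i ≠ f j := fun h => hij (hfinj h)
  by_cases hiz : i = z
  · have hjz : j ≠ z := fun h => hij (hiz.trans h.symm)
    have hfi : f i = rt := by rw [hiz]; exact hf_z
    have := chain_treeWeight hG w hpar_rt hadjG hdd hw (u := f i) (v := f j) (m := rt)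
      hfij (by rw [hfi]; exact anc_refl rt) (hanc_rt (f j))
      (fun x hx1 _ => hlca_rt (f j) x (by rw [hfi] at hx1; exact hx1))
    rw [this, hfi, hdeprt, hdepleaf j hjz, hiz]
    ring
  by_cases hjz : j = z
  · have hfj : f j = rt := by rw [hjz]; exact hf_z
    have := chain_treeWeight hG w hpar_rt hadjG hdd hw (u := f i) (v := f j) (m := rt)
      hfij (hanc_rt (f i)) (by rw [hfj]; exact anc_refl rt)
      (fun x _ hx2 => hlca_rt (f i) x (by rw [hfj] at hx2; exact hx2))
    rw [this, hfj, hdeprt, hdepleaf i hiz, hjz, hDsym z i]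
    ring
  · obtain ⟨h1, h2, h3⟩ := hlca_leaf i j hiz hjz hij
    have := chain_treeWeight hG w hpar_rt hadjG hdd hw hfij h1 h2 h3
    rw [this, hdepleaf i hiz, hdepleaf j hjz, hdepmk, hdep0_g i j hiz hjz hij, hg]
    simp only
    ring




end construct

end BunAux

/-- **Theorem (Buneman; Simões-Pereira; Zaretskii).** Let `{D_{i,j}}` be a family of
positive real numbers indexed by the 2-subsets of `[n]` satisfying the triangle
inequalities. It is p-treelike if and only if for all distinct `i,j,k,h ∈ [n]` the
maximum of `{D_{i,j}+D_{k,h}, D_{i,k}+D_{j,h}, D_{i,h}+D_{k,j}}` is attained at least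
twice. -/
theorem buneman_four_point (n : ℕ) (D : Finset (Fin n) → ℝ)
    (hpos : ∀ I : Finset (Fin n), I.card = 2 → 0 < D I)
    (htri : ∀ i j k : Fin n, i ≠ j → j ≠ k → i ≠ k →
      D {i, j} ≤ D {i, k} + D {k, j}) :
    IsPTreelike n 2 D ↔
      ∀ i j k h : Fin n, i ≠ j → i ≠ k → i ≠ h → j ≠ k → j ≠ h → k ≠ h →
        ((D {i, j} + D {k, h} = D {i, k} + D {j, h} ∧
            D {i, h} + D {k, j} ≤ D {i, j} + D {k, h}) ∨
         (D {i, j} + D {k, h} = D {i, h} + D {k, j} ∧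
            D {i, k} + D {j, h} ≤ D {i, j} + D {k, h}) ∨
         (D {i, k} + D {j, h} = D {i, h} + D {k, j} ∧
            D {i, j} + D {k, h} ≤ D {i, k} + D {j, h})) := by
  constructor
  · rintro ⟨V, instV, G, w, f, hG, hfinj, hwpos, hreal⟩ i j k h hij hik hih hjk hjh hkh
    have key : ∀ a b : Fin n, a ≠ b → treeWeight G w {f a, f b} = D {a, b} := by
      intro a b hab
      have := hreal {a, b} (Finset.card_pair hab)
      rwa [Finset.image_insert, Finset.image_singleton] at this
    have H := BunAux.tree_fourpoint hG w hwpos (f i) (f j) (f k) (f h)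
      (fun hc => hij (hfinj hc)) (fun hc => hik (hfinj hc)) (fun hc => hih (hfinj hc))
      (fun hc => hjk (hfinj hc)) (fun hc => hjh (hfinj hc)) (fun hc => hkh (hfinj hc))
    rwa [key i j hij, key k h hkh, key i k hik, key j h hjh, key i h hih,
      key k j hjk.symm] at H
  · intro H4
    by_cases hn : 0 < n
    · exact BunAux.construct n hn D hpos htri H4
    · have hn0 : n = 0 := by omega
      subst hn0
      refine ⟨PUnit, inferInstance, SimpleGraph.fromRel (fun a b => id a = b),
        fun _ => 1, fun i => i.elim0, ?_, fun a => a.elim0, fun e _ => one_pos, ?_⟩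
      · exact BunAux.chain_isTree (dep := fun _ => (0:ℝ)) (r := PUnit.unit) rfl
          (fun v hv => absurd (Subsingleton.elim v PUnit.unit) hv)
      · intro I hI
        exfalso
        have := Finset.card_le_univ I
        simp only [Finset.card_univ, Fintype.card_fin] at this
        omega


end
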